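/- Let k be a finite field and let r ≥ 1. Let p ∈ k[x,y] be a monic homogeneous polynomial of degree r+1 that is not divisible by y (monic means p(x,1) is monic as a univariate polynomial). Let h ∈ k[x,y] be a monic homogeneous polynomial of degree r that is coprime to y·p. Then y divides x·h − p in k[x,y], the quotient g := (x·h − p)/y is homogeneous of degree r and coprime to h, and x·h − y·g = p. -/

import Mathlib

open MvPolynomial

/-- The dehomogenization of a bivariate polynomial: set `y = 1`. -/
noncomputable def dehom {k : Type*} [CommSemiring k] (p : MvPolynomial (Fin 2) k) :
    Polynomial k :=
  MvPolynomial.aeval (fun i : Fin 2 => if i = 0 then Polynomial.X else 1) p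

/-- A homogeneous polynomial `p ∈ k[x,y]` is monic if `p(x,1)` is monic. -/
def MonicHom {k : Type*} [CommSemiring k] (p : MvPolynomial (Fin 2) k) : Prop :=
  (dehom p).Monic

lemma degree_fin2 (d : Fin 2 →₀ ℕ) : d.degree = d 0 + d 1 := by
  rw [Finsupp.degree_apply, Finset.sum_subset (Finset.subset_univ d.support)
    (fun i _ hi => Finsupp.notMem_support_iff.mp hi), Fin.sum_univ_two]

lemma dehom_eq_sum {k : Type*} [CommSemiring k] (q : MvPolynomial (Fin 2) k) :
    dehom q = ∑ d ∈ q.support, Polynomial.C (coeff d q) * Polynomial.X ^ (d 0) := by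
  rw [dehom, aeval_def, eval₂_eq]
  refine Finset.sum_congr rfl fun d _ => ?_
  have hprod : ∏ i ∈ d.support, (if i = 0 then Polynomial.X else (1:Polynomial k)) ^ d i
      = Polynomial.X ^ d 0 := by
    by_cases h0 : (0 : Fin 2) ∈ d.support
    · rw [Finset.prod_eq_single_of_mem 0 h0 (fun i _ hi => by simp [hi, one_pow])]
      simp
    · rw [Finsupp.notMem_support_iff.mp h0, pow_zero]
      refine Finset.prod_eq_one fun i hi => ?_
      have : i ≠ 0 := fun h => h0 (h ▸ hi)
      simp [this]
  rw [hprod, Polynomial.algebraMap_eq]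

lemma dehom_coeff_of_homog {k : Type*} [CommSemiring k] {q : MvPolynomial (Fin 2) k} {n : ℕ}
    (hq : q.IsHomogeneous n) : (dehom q).coeff n = coeff (Finsupp.single 0 n) q := by
  rw [dehom_eq_sum, Polynomial.finset_sum_coeff]
  simp only [Polynomial.coeff_C_mul, Polynomial.coeff_X_pow]
  rw [Finset.sum_eq_single (Finsupp.single 0 n)]
  · simp
  · intro d hd hne
    suffices hdn : d 0 ≠ n by simp [Ne.symm hdn]
    intro h0
    apply hne
    have hdeg := hq (mem_support_iff.mp hd)
    rw [show (Finsupp.weight 1 : (Fin 2 →₀ ℕ) →+ ℕ) = Finsupp.degree from Finsupp.degree_eq_weight_one.symm, degree_fin2] at hdeg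
    have h1 : d 1 = 0 := by omega
    ext i; fin_cases i <;> simp [h0, h1]
  · intro hns
    simpa using MvPolynomial.notMem_support_iff.mp hns

lemma dehom_natDegree_le {k : Type*} [CommSemiring k] {q : MvPolynomial (Fin 2) k} {n : ℕ}
    (hq : q.IsHomogeneous n) : (dehom q).natDegree ≤ n := by
  rw [dehom_eq_sum]
  refine Polynomial.natDegree_sum_le_of_forall_le _ _ fun d hd => ?_
  refine (Polynomial.natDegree_C_mul_le _ _).trans ((Polynomial.natDegree_X_pow_le _).trans ?_)
  have hdeg := hq (mem_support_iff.mp hd)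
  rw [show (Finsupp.weight 1 : (Fin 2 →₀ ℕ) →+ ℕ) = Finsupp.degree from Finsupp.degree_eq_weight_one.symm, degree_fin2] at hdeg
  omega

/-- A homogeneous polynomial of degree `n` whose `x^n` coefficient vanishes is
divisible by `y`. -/
lemma X1_dvd_of_coeff_eq_zero {k : Type*} [CommRing k] {q : MvPolynomial (Fin 2) k} {n : ℕ}
    (hq : q.IsHomogeneous n) (hc : coeff (Finsupp.single 0 n) q = 0) :
    X (1 : Fin 2) ∣ q := by
  rw [X_dvd_iff_modMonomial_eq_zero]
  ext d
  rw [coeff_zero]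
  by_cases hle : Finsupp.single (1 : Fin 2) 1 ≤ d
  · exact coeff_modMonomial_of_le q hle
  · rw [coeff_modMonomial_of_not_le q hle]
    have h1 : d 1 = 0 := by
      rw [Finsupp.single_le_iff] at hle; omega
    by_contra hne
    have hdeg := hq hne
    rw [show (Finsupp.weight 1 : (Fin 2 →₀ ℕ) →+ ℕ) = Finsupp.degree from Finsupp.degree_eq_weight_one.symm, degree_fin2] at hdeg
    have h0 : d 0 = n := by omega
    have : d = Finsupp.single 0 n := by ext i; fin_cases i <;> simp [h0, h1]
    exact hne (this ▸ hc)

/-- If `y * g` is homogeneous of degree `n + 1`, then `g` is homogeneous of degree `n`. -/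
lemma isHomogeneous_of_X1_mul {k : Type*} [CommSemiring k] {g : MvPolynomial (Fin 2) k} {n : ℕ}
    (hg : (X (1 : Fin 2) * g).IsHomogeneous (n + 1)) : g.IsHomogeneous n := by
  intro d hd
  have hcoeff : coeff (Finsupp.single 1 1 + d) (X (1 : Fin 2) * g) = coeff d g :=
    coeff_X_mul d 1 g
  have hdeg := hg (by rw [hcoeff]; exact hd)
  rw [show (Finsupp.weight 1 : (Fin 2 →₀ ℕ) →+ ℕ) = Finsupp.degree from Finsupp.degree_eq_weight_one.symm, degree_fin2] at hdeg ⊢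
  simp [Finsupp.add_apply, Finsupp.single_apply] at hdeg
  omega

/-- For a homogeneous monic polynomial of degree `n` not divisible by `y`, the
coefficient of `x^n` is `1`. -/
lemma coeff_top_eq_one {k : Type*} [CommRing k] [Nontrivial k] {q : MvPolynomial (Fin 2) k}
    {n : ℕ} (hq : q.IsHomogeneous n) (hqm : MonicHom q) (hqy : ¬ (X (1 : Fin 2) ∣ q)) :
    coeff (Finsupp.single 0 n) q = 1 := by
  have hne : coeff (Finsupp.single 0 n) q ≠ 0 := fun hc =>
    hqy (X1_dvd_of_coeff_eq_zero hq hc)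
  have hco : (dehom q).coeff n ≠ 0 := by rwa [dehom_coeff_of_homog hq]
  have hdn : (dehom q).natDegree = n :=
    le_antisymm (dehom_natDegree_le hq) (Polynomial.le_natDegree_of_ne_zero hco)
  have := hqm.coeff_natDegree
  rw [hdn, dehom_coeff_of_homog hq] at this
  exact this

/-- converse direction of the first case of Proposition 2.6 of the
paper.  If `p` is monic homogeneous of degree `r+1`, not divisible by `y`, and `h`
is monic homogeneous of degree `r` coprime to `y·p`, then `y ∣ x·h − p`, the
quotient `g = (x·h − p)/y` is homogeneous of degree `r` and coprime to `h`, and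
`x·h − y·g = p`. -/
theorem stmt_5 (k : Type*) [Field k] [Fintype k] (r : ℕ) (hr : 1 ≤ r)
    (p : MvPolynomial (Fin 2) k) (hp : p.IsHomogeneous (r + 1)) (hpm : MonicHom p)
    (hpy : ¬ (X 1 ∣ p))
    (h : MvPolynomial (Fin 2) k)
    (hh : h.IsHomogeneous r) (hhm : MonicHom h)
    (hcop : IsRelPrime h (X 1 * p)) :
    ∃ g : MvPolynomial (Fin 2) k,
      X 0 * h - p = X 1 * g ∧ g.IsHomogeneous r ∧ IsRelPrime g h ∧
      X 0 * h - X 1 * g = p := by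
  -- `y` does not divide `h`
  have hXnu : ¬ IsUnit (X (1 : Fin 2) : MvPolynomial (Fin 2) k) := by
    intro hu
    obtain ⟨v, hv⟩ := hu.exists_right_inv
    have := congrArg constantCoeff hv
    simp at this
  have hhy : ¬ (X (1 : Fin 2) ∣ h) := fun hdvd =>
    hXnu (hcop hdvd (Dvd.intro p rfl))
  have hph : coeff (Finsupp.single 0 (r + 1)) p = 1 := coeff_top_eq_one hp hpm hpy
  have hhc : coeff (Finsupp.single 0 r) h = 1 := coeff_top_eq_one hh hhm hhy
  -- the difference `q = x h - p` is homogeneous of degree `r+1`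
  set q := X (0 : Fin 2) * h - p with hqdef
  have hxh : (X (0 : Fin 2) * h).IsHomogeneous (r + 1) := by
    have := (isHomogeneous_X k (0 : Fin 2)).mul hh
    rwa [add_comm] at this
  have hq : q.IsHomogeneous (r + 1) := hxh.sub hp
  -- its top coefficient vanishes
  have hsingle : (Finsupp.single (0 : Fin 2) (r + 1)) =
      Finsupp.single 0 1 + Finsupp.single 0 r := by
    rw [← Finsupp.single_add]; congr 1; omega
  have hqc : coeff (Finsupp.single 0 (r + 1)) q = 0 := by
    rw [hqdef, coeff_sub, hph, hsingle, coeff_X_mul, hhc, sub_self]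
  obtain ⟨g, hg⟩ := X1_dvd_of_coeff_eq_zero hq hqc
  refine ⟨g, hg, isHomogeneous_of_X1_mul (hg ▸ hq), ?_, ?_⟩
  · intro d hdg hdh
    have hdp : d ∣ p := by
      have h1 : d ∣ X (0 : Fin 2) * h := hdh.trans (dvd_mul_left h (X 0))
      have h2 : d ∣ X (1 : Fin 2) * g := hdg.trans (dvd_mul_left g (X 1))
      have := dvd_sub h1 (hg ▸ h2)
      rwa [hqdef, sub_sub_cancel] at this
    exact hcop hdh (hdp.trans (dvd_mul_left p (X 1)))
  · rw [← hg, hqdef, sub_sub_cancel]
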